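/- Let g(x) = (1/√π)e^{−x²}. Assume the Ingham-based bound: for every f(x) = Σ_{j=1}^s a_j e^{iλ_jx} with real frequencies of pairwise gap at least γ > 0, (6/γ)Σ_j|a_j|² ≤ ∫_{−2π/γ}^{2π/γ}|f(x)|²dx. Then for all x ∈ ℝ, the leverage score of the gap class satisfies τ_{s,γ,g}(x) ≤ (γ/6)e^{4π²/γ²} · s · e^{−x²}. -/

import Mathlib

open MeasureTheory Real

/-- Gaussian leverage bound for the gap class `T_{s,γ}`. -/
theorem stmt7 (s : ℕ) (γ : ℝ) (hγ : 0 < γ)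
    (hIngham : ∀ (a : Fin s → ℂ) (lam : Fin s → ℝ),
      (∀ j k : Fin s, j ≠ k → γ ≤ |lam j - lam k|) →
      (6 / γ) * ∑ j, ‖a j‖ ^ 2 ≤
        ∫ t in (-(2 * π / γ))..(2 * π / γ),
          ‖∑ j, a j * Complex.exp (Complex.I * (lam j : ℂ) * (t : ℂ))‖ ^ 2)
    (a : Fin s → ℂ) (lam : Fin s → ℝ)
    (hgap : ∀ j k : Fin s, j ≠ k → γ ≤ |lam j - lam k|)
    (f : ℝ → ℂ)
    (hf : ∀ x : ℝ, f x = ∑ j, a j * Complex.exp (Complex.I * (lam j : ℂ) * (x : ℂ)))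
    (hf0 : f ≠ 0) (x : ℝ) :
    ‖f x‖ ^ 2 * ((1 / Real.sqrt π) * Real.exp (-x ^ 2)) /
      (∫ y : ℝ, ‖f y‖ ^ 2 * ((1 / Real.sqrt π) * Real.exp (-y ^ 2)))
      ≤ (γ / 6) * Real.exp (4 * π ^ 2 / γ ^ 2) * s * Real.exp (-x ^ 2) := by
  set k : ℝ := 1 / Real.sqrt π with hk
  have hkpos : 0 < k := by
    have : 0 < Real.sqrt π := Real.sqrt_pos.mpr Real.pi_pos
    positivity
  set c : ℝ := 2 * π / γ with hc
  have hcpos : 0 < c := by positivity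
  have hcsq : 4 * π ^ 2 / γ ^ 2 = c ^ 2 := by
    rw [hc]
    field_simp
    ring
  set S : ℝ := ∑ j, ‖a j‖ ^ 2 with hS
  have hSnonneg : 0 ≤ S := Finset.sum_nonneg fun j _ => by positivity
  -- S > 0
  have hSpos : 0 < S := by
    rcases hSnonneg.lt_or_eq with h | h
    · exact h
    · exfalso
      apply hf0
      have ha : ∀ j, a j = 0 := by
        intro j
        have := (Finset.sum_eq_zero_iff_of_nonneg
          (fun j _ => by positivity : ∀ j ∈ Finset.univ, (0:ℝ) ≤ ‖a j‖ ^ 2)).mp h.symm j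
          (Finset.mem_univ j)
        have : ‖a j‖ = 0 := by nlinarith [norm_nonneg (a j)]
        simpa using this
      funext y
      simp [hf y, ha]
  -- pointwise norm bound
  have hnorm : ∀ y : ℝ, ‖f y‖ ^ 2 ≤ s * S := by
    intro y
    rw [hf y]
    have h1 : ‖∑ j, a j * Complex.exp (Complex.I * (lam j : ℂ) * (y : ℂ))‖
        ≤ ∑ j, ‖a j‖ := by
      refine le_trans (norm_sum_le _ _) (le_of_eq ?_)
      refine Finset.sum_congr rfl fun j _ => ?_
      rw [norm_mul]
      have : ‖Complex.exp (Complex.I * (lam j : ℂ) * (y : ℂ))‖ = 1 := by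
        rw [Complex.norm_exp]
        simp [Complex.mul_re, Complex.mul_im]
      rw [this, mul_one]
    have h2 : (∑ j, ‖a j‖) ^ 2 ≤ (Finset.univ.card : ℝ) * ∑ j, ‖a j‖ ^ 2 :=
      sq_sum_le_card_mul_sum_sq
    have h3 : ‖∑ j, a j * Complex.exp (Complex.I * (lam j : ℂ) * (y : ℂ))‖ ^ 2
        ≤ (∑ j, ‖a j‖) ^ 2 := by
      apply pow_le_pow_left₀ (norm_nonneg _) h1
    simpa [hS] using h3.trans h2
  -- continuity of f
  have hfc : Continuous f := by
    have : Continuous fun y : ℝ =>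
        ∑ j, a j * Complex.exp (Complex.I * (lam j : ℂ) * (y : ℂ)) := by
      apply continuous_finset_sum
      intro j _
      exact continuous_const.mul (Complex.continuous_exp.comp
        (continuous_const.mul Complex.continuous_ofReal))
    exact (funext hf : f = _) ▸ this
  -- integrability
  have hIntG : Integrable (fun y : ℝ => Real.exp (-y ^ 2)) := by
    have := integrable_exp_neg_mul_sq (one_pos)
    simpa using this
  have hInt : Integrable (fun y : ℝ => ‖f y‖ ^ 2 * (k * Real.exp (-y ^ 2))) := by
    apply Integrable.mono' (hIntG.const_mul (s * S * k))
    · exact ((hfc.norm.pow 2).mul (continuous_const.mul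
        ((continuous_pow 2).neg.rexp))).aestronglyMeasurable
    · filter_upwards with y
      rw [norm_mul, Real.norm_of_nonneg (by positivity : (0:ℝ) ≤ ‖f y‖ ^ 2),
        Real.norm_of_nonneg (by positivity : (0:ℝ) ≤ k * Real.exp (-y ^ 2))]
      have := mul_le_mul_of_nonneg_right (hnorm y)
        (mul_nonneg hkpos.le (Real.exp_pos (-y ^ 2)).le)
      linarith [this]
  set D : ℝ := ∫ y : ℝ, ‖f y‖ ^ 2 * (k * Real.exp (-y ^ 2)) with hD
  -- lower bound on D via the interval
  have hIoc : MeasurableSet (Set.Ioc (-c) c) := measurableSet_Ioc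
  have hfsqInt : IntegrableOn (fun y : ℝ => ‖f y‖ ^ 2) (Set.Ioc (-c) c) :=
    (hfc.norm.pow 2).integrableOn_Ioc
  have step1 : ∫ y in Set.Ioc (-c) c, ‖f y‖ ^ 2 * (k * Real.exp (-y ^ 2)) ≤ D := by
    apply setIntegral_le_integral hInt
    filter_upwards with y
    positivity
  have step2 : ∫ y in Set.Ioc (-c) c, (k * Real.exp (-c ^ 2)) * ‖f y‖ ^ 2
      ≤ ∫ y in Set.Ioc (-c) c, ‖f y‖ ^ 2 * (k * Real.exp (-y ^ 2)) := by
    apply setIntegral_mono_on (hfsqInt.const_mul _) (hInt.integrableOn) hIoc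
    intro y hy
    have hy2 : y ^ 2 ≤ c ^ 2 := by
      rcases hy with ⟨h1, h2⟩
      nlinarith
    have : Real.exp (-c ^ 2) ≤ Real.exp (-y ^ 2) := Real.exp_le_exp.mpr (by linarith)
    nlinarith [mul_le_mul_of_nonneg_left this
      (mul_nonneg hkpos.le (sq_nonneg ‖f y‖))]
  have step3 : (k * Real.exp (-c ^ 2)) * ((6 / γ) * S)
      ≤ ∫ y in Set.Ioc (-c) c, (k * Real.exp (-c ^ 2)) * ‖f y‖ ^ 2 := by
    rw [integral_const_mul]
    apply mul_le_mul_of_nonneg_left _ (by positivity)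
    have hle : (-c) ≤ c := by linarith
    have := hIngham a lam hgap
    rw [intervalIntegral.integral_of_le hle] at this
    calc (6 / γ) * S ≤ ∫ t in Set.Ioc (-c) c,
          ‖∑ j, a j * Complex.exp (Complex.I * (lam j : ℂ) * (t : ℂ))‖ ^ 2 := this
      _ = ∫ y in Set.Ioc (-c) c, ‖f y‖ ^ 2 := by
          apply setIntegral_congr_fun hIoc
          intro t _
          simp only [hf]
  have hDlb : (k * Real.exp (-c ^ 2)) * ((6 / γ) * S) ≤ D :=
    le_trans step3 (le_trans step2 step1)
  have hDpos : 0 < D := lt_of_lt_of_le (by positivity) hDlb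
  rw [div_le_iff₀ hDpos, hcsq]
  have hRnn : (0:ℝ) ≤ (γ / 6) * Real.exp (c ^ 2) * s * Real.exp (-x ^ 2) := by positivity
  calc ‖f x‖ ^ 2 * (k * Real.exp (-x ^ 2))
      ≤ (s * S) * (k * Real.exp (-x ^ 2)) := by
        apply mul_le_mul_of_nonneg_right (hnorm x) (by positivity)
    _ = ((γ / 6) * Real.exp (c ^ 2) * s * Real.exp (-x ^ 2)) *
        ((k * Real.exp (-c ^ 2)) * ((6 / γ) * S)) := by
        have hexp : Real.exp (c ^ 2) * Real.exp (-c ^ 2) = 1 := by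
          rw [← Real.exp_add, add_neg_cancel, Real.exp_zero]
        have hγ6 : γ / 6 * (6 / γ) = 1 := by field_simp
        have hre : (γ / 6) * Real.exp (c ^ 2) * s * Real.exp (-x ^ 2) *
            ((k * Real.exp (-c ^ 2)) * ((6 / γ) * S))
            = (Real.exp (c ^ 2) * Real.exp (-c ^ 2)) * ((γ / 6) * (6 / γ)) *
              ((s : ℝ) * S * (k * Real.exp (-x ^ 2))) := by ring
        rw [hre, hexp, hγ6, one_mul, one_mul]
    _ ≤ ((γ / 6) * Real.exp (c ^ 2) * s * Real.exp (-x ^ 2)) * D :=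
        mul_le_mul_of_nonneg_left hDlb hRnn
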